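/- Let $W$ be an $n \times n$ complex Hermitian matrix with real eigenvalues $\lambda_1, \dots, \lambda_n$ (counted with multiplicity). Then for every $n \times n$ Hermitian positive semidefinite matrix $X$, $\|X - W\|_2^2 \geq \sum_{i : \lambda_i \leq 0} \lambda_i^2$. -/

import Mathlib

set_option maxHeartbeats 1000000

open Matrix Finset
open scoped ComplexOrder

/-- Squared Frobenius norm of a complex matrix: `Re (tr (Mᴴ M))`. -/
noncomputable def frobSq {n : ℕ} (M : Matrix (Fin n) (Fin n) ℂ) : ℝ :=
  ((Mᴴ * M).trace).re

lemma frobSq_eq {n : ℕ} (M : Matrix (Fin n) (Fin n) ℂ) :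
    frobSq M = ∑ i, ∑ j, Complex.normSq (M j i) := by
  simp only [frobSq, Matrix.trace, Matrix.diag, Matrix.mul_apply, Matrix.conjTranspose_apply]
  rw [Complex.re_sum]
  refine Finset.sum_congr rfl fun i _ => ?_
  rw [Complex.re_sum]
  refine Finset.sum_congr rfl fun j _ => ?_
  simp [Complex.normSq_apply, Complex.mul_re, mul_comm]

lemma frobSq_unitary {n : ℕ} (M : Matrix (Fin n) (Fin n) ℂ)
    (U : Matrix (Fin n) (Fin n) ℂ) (hU : U ∈ Matrix.unitaryGroup (Fin n) ℂ) :
    frobSq (star U * M * U) = frobSq M := by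
  have h1 : U * star U = 1 := (Matrix.mem_unitaryGroup_iff).mp hU
  have h2 : star U * U = 1 := (Matrix.mem_unitaryGroup_iff').mp hU
  unfold frobSq
  congr 1
  have : (star U * M * U)ᴴ * (star U * M * U) = star U * (Mᴴ * M) * U := by
    have h1' : U * Uᴴ = 1 := h1
    simp only [Matrix.conjTranspose_mul, Matrix.star_eq_conjTranspose,
      Matrix.conjTranspose_conjTranspose, Matrix.mul_assoc]
    rw [← Matrix.mul_assoc U Uᴴ, h1', Matrix.one_mul]
  rw [this, Matrix.mul_assoc, Matrix.trace_mul_comm, Matrix.mul_assoc, h1, Matrix.mul_one]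

theorem stmt_2 {n : ℕ} (W : Matrix (Fin n) (Fin n) ℂ) (hW : W.IsHermitian)
    (X : Matrix (Fin n) (Fin n) ℂ) (hX : X.PosSemidef) :
    frobSq (X - W) ≥
      ∑ i ∈ Finset.univ.filter (fun i => hW.eigenvalues i ≤ 0), (hW.eigenvalues i) ^ 2 := by
  set U : Matrix (Fin n) (Fin n) ℂ := (hW.eigenvectorUnitary : Matrix (Fin n) (Fin n) ℂ)
  have hU : U ∈ Matrix.unitaryGroup (Fin n) ℂ := hW.eigenvectorUnitary.2
  set Y : Matrix (Fin n) (Fin n) ℂ := star U * X * U with hYdef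
  have hY : Y.PosSemidef := by
    simpa [hYdef, Matrix.star_eq_conjTranspose] using hX.conjTranspose_mul_mul_same U
  have hdiag : star U * W * U = Matrix.diagonal (Complex.ofReal ∘ hW.eigenvalues) :=
    by have := hW.conjStarAlgAut_star_eigenvectorUnitary; rw [Unitary.conjStarAlgAut_star_apply] at this; exact this
  have hkey : frobSq (X - W) =
      frobSq (Y - Matrix.diagonal (Complex.ofReal ∘ hW.eigenvalues)) := by
    rw [← hdiag, ← frobSq_unitary (X - W) U hU]
    congr 1
    rw [Matrix.mul_sub, Matrix.sub_mul]
  rw [ge_iff_le, hkey, frobSq_eq]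
  -- diagonal entries of Y are real and nonneg
  have hYre : ∀ i, 0 ≤ (Y i i).re := by
    intro i
    have := hY.re_dotProduct_nonneg (Pi.single i 1)
    simpa [dotProduct, Matrix.mulVec, Pi.single_apply, Finset.sum_ite_eq,
      Finset.sum_ite_eq'] using this
  have hYreal : ∀ i, Y i i = Complex.ofReal ((Y i i).re) := by
    intro i
    have h := congrFun (congrFun hY.isHermitian i) i
    rw [Matrix.conjTranspose_apply] at h
    exact (Complex.conj_eq_iff_re.mp h).symm
  calc ∑ i ∈ Finset.univ.filter (fun i => hW.eigenvalues i ≤ 0), (hW.eigenvalues i) ^ 2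
      ≤ ∑ i, Complex.normSq ((Y - Matrix.diagonal (Complex.ofReal ∘ hW.eigenvalues)) i i) := by
        rw [← Finset.sum_filter_add_sum_filter_not Finset.univ (fun i => hW.eigenvalues i ≤ 0)]
        have h1 : ∀ i ∈ Finset.univ.filter (fun i => hW.eigenvalues i ≤ 0),
            (hW.eigenvalues i) ^ 2 ≤
            Complex.normSq ((Y - Matrix.diagonal (Complex.ofReal ∘ hW.eigenvalues)) i i) := by
          intro i hi
          rw [Finset.mem_filter] at hi
          have hlam : hW.eigenvalues i ≤ 0 := hi.2
          have : (Y - Matrix.diagonal (Complex.ofReal ∘ hW.eigenvalues)) i i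
              = Complex.ofReal ((Y i i).re - hW.eigenvalues i) := by
            simp only [Matrix.sub_apply, Matrix.diagonal_apply_eq, Function.comp_apply]
            rw [hYreal i]
            rw [Complex.ofReal_re]
            push_cast
            ring
          rw [this, Complex.normSq_ofReal]
          have h0 : -hW.eigenvalues i ≤ (Y i i).re - hW.eigenvalues i := by
            have := hYre i; linarith
          nlinarith [hYre i]
        refine le_add_of_le_of_nonneg (Finset.sum_le_sum h1) ?_
        exact Finset.sum_nonneg fun i _ => Complex.normSq_nonneg _
    _ ≤ ∑ i, ∑ j, Complex.normSq ((Y - Matrix.diagonal (Complex.ofReal ∘ hW.eigenvalues)) j i) := by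
        refine Finset.sum_le_sum fun i _ => ?_
        exact Finset.single_le_sum
          (f := fun j => Complex.normSq ((Y - Matrix.diagonal (Complex.ofReal ∘ hW.eigenvalues)) j i))
          (fun j _ => Complex.normSq_nonneg _) (Finset.mem_univ i)
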